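/- arXiv:2109.11259 — 5 statements merged into one kernel-verified Lean document; each statement's English description precedes it below -/
import Mathlib

section
/- Let P(x,c,m) := p_B(1−r)·γ_B(c)·β_B(m|c)·s_B(x|c,m) + p_S·r·γ(c)·Σ_{m'∈M_c} π_c(m|m')·β(m'|c)·∫_{ℝ^n} φ(x|x',m)·s(x'|c,m') dx' denote the unnormalized predicted joint density of the Bernoulli filter, let r' := p_B(1−r) + p_S·r, γ'(c) := [p_B(1−r)·γ_B(c) + p_S·r·γ(c)]/r', and β'(m|c) := [p_B(1−r)·γ_B(c)·β_B(m|c) + p_S·r·γ(c)·Σ_{m'∈M_c} π_c(m|m')·β(m'|c)] / (r'·γ'(c)). Fix c∈C and m∈M_c such that r' > 0, γ'(c) > 0 and β'(m|c) > 0, and define the predicted state PDF s'(x|c,m) := P(x,c,m) / (r'·γ'(c)·β'(m|c)). Then s'(·|c,m) is a state PDF, i.e., s'(x|c,m) ≥ 0 for all x and ∫_{ℝ^n} s'(x|c,m) dx = 1. -/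
open MeasureTheory

open scoped ENNReal

lemma chapman_aux {n : ℕ} (φ : (Fin n → ℝ) → (Fin n → ℝ) → ℝ) (s : (Fin n → ℝ) → ℝ)
    (hφmeas : Measurable (fun p : (Fin n → ℝ) × (Fin n → ℝ) => φ p.1 p.2))
    (hφ0 : ∀ x x', 0 ≤ φ x x') (hφ1 : ∀ x', ∫ x, φ x x' = 1)
    (hsmeas : Measurable s) (hs0 : ∀ x, 0 ≤ s x) (hs1 : ∫ x, s x = 1) :
    Integrable (fun x => ∫ x', φ x x' * s x') ∧
      ∫ x, ∫ x', φ x x' * s x' = 1 := by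
  set F : (Fin n → ℝ) × (Fin n → ℝ) → ℝ≥0∞ :=
    fun p => ENNReal.ofReal (φ p.1 p.2 * s p.2) with hF
  have hFmeas : Measurable F :=
    (hφmeas.mul (hsmeas.comp measurable_snd)).ennreal_ofReal
  have hswap : ∫⁻ x, ∫⁻ x', F (x, x') = ∫⁻ x', ∫⁻ x, F (x, x') :=
    lintegral_lintegral_swap hFmeas.aemeasurable
  have hinner : ∀ x', ∫⁻ x, F (x, x') = ENNReal.ofReal (s x') := by
    intro x'
    have hint : Integrable (fun x => φ x x') := integrable_of_integral_eq_one (hφ1 x')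
    have h1 : ∫⁻ x, ENNReal.ofReal (φ x x') = 1 := by
      rw [← ofReal_integral_eq_lintegral_ofReal hint (Filter.Eventually.of_forall fun x => hφ0 x x'),
        hφ1 x', ENNReal.ofReal_one]
    calc ∫⁻ x, F (x, x')
        = ∫⁻ x, ENNReal.ofReal (φ x x') * ENNReal.ofReal (s x') := by
          simp only [hF, ENNReal.ofReal_mul (hφ0 _ x')]
      _ = (∫⁻ x, ENNReal.ofReal (φ x x')) * ENNReal.ofReal (s x') :=
          lintegral_mul_const _ ((hφmeas.comp (measurable_id.prodMk measurable_const)).ennreal_ofReal)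
      _ = ENNReal.ofReal (s x') := by rw [h1, one_mul]
  have hsint : Integrable s := integrable_of_integral_eq_one hs1
  have htot : ∫⁻ x, ∫⁻ x', F (x, x') = 1 := by
    rw [hswap]
    simp only [hinner]
    rw [← ofReal_integral_eq_lintegral_ofReal hsint (Filter.Eventually.of_forall hs0), hs1,
      ENNReal.ofReal_one]
  set G : (Fin n → ℝ) → ℝ≥0∞ := fun x => ∫⁻ x', F (x, x') with hG
  have hGmeas : Measurable G := hFmeas.lintegral_prod_right'
  have hGfin : ∀ᵐ x, G x < ⊤ := by
    apply ae_lt_top hGmeas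
    rw [htot]; exact ENNReal.one_ne_top
  have hval : ∀ x, ∫ x', φ x x' * s x' = (G x).toReal := by
    intro x
    rw [integral_eq_lintegral_of_nonneg_ae
      (Filter.Eventually.of_forall fun x' => mul_nonneg (hφ0 x x') (hs0 x'))
      ((hφmeas.comp (measurable_const.prodMk measurable_id)).mul hsmeas).aestronglyMeasurable]
  constructor
  · have : Integrable (fun x => (G x).toReal) :=
      integrable_toReal_of_lintegral_ne_top hGmeas.aemeasurable (by rw [htot]; exact ENNReal.one_ne_top)
    simpa only [hval] using this
  · simp only [hval]
    rw [integral_toReal hGmeas.aemeasurable hGfin, htot, ENNReal.toReal_one]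

/-- The predicted class&mode-conditioned state PDF of the JDTC Bernoulli
filter is a genuine state PDF: nonnegative and integrating to one. -/
theorem jdtc_predicted_state_pdf
    {C : Type*} [Fintype C] [Nonempty C]
    {M : C → Type*} [∀ c, Fintype (M c)] [∀ c, Nonempty (M c)]
    {n : ℕ}
    (pB pS r : ℝ)
    (hpB : pB ∈ Set.Icc (0 : ℝ) 1) (hpS : pS ∈ Set.Icc (0 : ℝ) 1)
    (hr : r ∈ Set.Icc (0 : ℝ) 1)
    -- birth class PMF
    (γB : C → ℝ) (hγB0 : ∀ c, 0 ≤ γB c) (hγB1 : ∑ c, γB c = 1)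
    -- birth mode PMFs
    (βB : (c : C) → M c → ℝ) (hβB0 : ∀ c m, 0 ≤ βB c m)
    (hβB1 : ∀ c, ∑ m, βB c m = 1)
    -- birth state PDFs
    (sB : (c : C) → M c → (Fin n → ℝ) → ℝ)
    (hsBmeas : ∀ c m, Measurable (sB c m)) (hsB0 : ∀ c m x, 0 ≤ sB c m x)
    (hsB1 : ∀ c m, ∫ x, sB c m x = 1)
    -- prior class PMF
    (γ : C → ℝ) (hγ0 : ∀ c, 0 ≤ γ c) (hγ1 : ∑ c, γ c = 1)
    -- prior mode PMFs
    (β : (c : C) → M c → ℝ) (hβ0 : ∀ c m, 0 ≤ β c m)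
    (hβ1 : ∀ c, ∑ m, β c m = 1)
    -- prior state PDFs
    (s : (c : C) → M c → (Fin n → ℝ) → ℝ)
    (hsmeas : ∀ c m, Measurable (s c m)) (hs0 : ∀ c m x, 0 ≤ s c m x)
    (hs1 : ∀ c m, ∫ x, s c m x = 1)
    -- mode transition probabilities π_c(m|m')
    (πc : (c : C) → M c → M c → ℝ) (hπ0 : ∀ c m m', 0 ≤ πc c m m')
    (hπ1 : ∀ c m', ∑ m, πc c m m' = 1)
    -- state transition kernel φ(x|x',m)
    (φ : (c : C) → M c → (Fin n → ℝ) → (Fin n → ℝ) → ℝ)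
    (hφmeas : ∀ c m, Measurable (fun p : (Fin n → ℝ) × (Fin n → ℝ) => φ c m p.1 p.2))
    (hφ0 : ∀ c m x x', 0 ≤ φ c m x x')
    (hφ1 : ∀ c m x', ∫ x, φ c m x x' = 1)
    -- unnormalized predicted joint density
    (P : (Fin n → ℝ) → (c : C) → M c → ℝ)
    (hP : ∀ x c m, P x c m =
      pB * (1 - r) * (γB c * (βB c m * sB c m x))
      + pS * r * γ c *
        ∑ m' : M c, πc c m m' * β c m' * ∫ x', φ c m x x' * s c m' x')
    -- fixed class and mode
    (c : C) (m : M c)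
    -- predicted existence probability, class probability and mode probability
    (r' γ' β' : ℝ)
    (hr'def : r' = pB * (1 - r) + pS * r) (hr' : 0 < r')
    (hγ'def : γ' = (pB * (1 - r) * γB c + pS * r * γ c) / r') (hγ' : 0 < γ')
    (hβ'def : β' = (pB * (1 - r) * γB c * βB c m
        + pS * r * γ c * ∑ m' : M c, πc c m m' * β c m') / (r' * γ'))
    (hβ' : 0 < β')
    -- predicted state PDF
    (s' : (Fin n → ℝ) → ℝ)
    (hs'def : ∀ x, s' x = P x c m / (r' * γ' * β')) :
    (∀ x, 0 ≤ s' x) ∧ ∫ x, s' x = 1 := by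
  -- basic nonnegativity facts
  have hA0 : 0 ≤ pB * (1 - r) := mul_nonneg hpB.1 (by linarith [hr.2])
  have hB0 : 0 ≤ pS * r * γ c := mul_nonneg (mul_nonneg hpS.1 hr.1) (hγ0 c)
  -- the Chapman–Kolmogorov integrals
  have hch : ∀ m' : M c,
      Integrable (fun x => ∫ x', φ c m x x' * s c m' x') ∧
        ∫ x, ∫ x', φ c m x x' * s c m' x' = 1 := fun m' =>
    chapman_aux (φ c m) (s c m') (hφmeas c m) (hφ0 c m) (hφ1 c m)
      (hsmeas c m') (hs0 c m') (hs1 c m')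
  have hg0 : ∀ (m' : M c) (x), 0 ≤ ∫ x', φ c m x x' * s c m' x' := fun m' x =>
    integral_nonneg fun x' => mul_nonneg (hφ0 c m x x') (hs0 c m' x')
  -- nonnegativity of P
  have hP0 : ∀ x, 0 ≤ P x c m := by
    intro x
    rw [hP]
    apply add_nonneg
    · exact mul_nonneg hA0 (mul_nonneg (hγB0 c) (mul_nonneg (hβB0 c m) (hsB0 c m x)))
    · exact mul_nonneg hB0 <| Finset.sum_nonneg fun m' _ =>
        mul_nonneg (mul_nonneg (hπ0 c m m') (hβ0 c m')) (hg0 m' x)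
  have hD : 0 < r' * γ' * β' := mul_pos (mul_pos hr' hγ') hβ'
  -- integrability pieces
  have hsBint : Integrable (sB c m) := integrable_of_integral_eq_one (hsB1 c m)
  have hsumint : Integrable (fun x =>
      ∑ m' : M c, πc c m m' * β c m' * ∫ x', φ c m x x' * s c m' x') :=
    integrable_finset_sum _ fun m' _ => ((hch m').1.const_mul _)
  -- integral of P
  have hPint : ∫ x, P x c m
      = pB * (1 - r) * γB c * βB c m
        + pS * r * γ c * ∑ m' : M c, πc c m m' * β c m' := by
    have : ∫ x, P x c m = ∫ x,
        (pB * (1 - r) * (γB c * (βB c m * sB c m x))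
          + pS * r * γ c *
            ∑ m' : M c, πc c m m' * β c m' * ∫ x', φ c m x x' * s c m' x') :=
      integral_congr_ae (Filter.Eventually.of_forall fun x => hP x c m)
    rw [this, integral_add (((hsBint.const_mul _).const_mul _).const_mul _)
      (hsumint.const_mul _), integral_const_mul, integral_const_mul, integral_const_mul,
      hsB1, integral_const_mul,
      integral_finset_sum _ (fun m' _ => ((hch m').1.const_mul _))]
    simp only [integral_const_mul, (fun m' => (hch m').2), mul_one]
    ring
  have hnum : ∫ x, P x c m = r' * γ' * β' := by
    rw [hPint, hβ'def]
    field_simp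
  refine ⟨fun x => ?_, ?_⟩
  · rw [hs'def]
    exact div_nonneg (hP0 x) hD.le
  · have : ∫ x, s' x = ∫ x, P x c m / (r' * γ' * β') :=
      integral_congr_ae (Filter.Eventually.of_forall fun x => hs'def x)
    rw [this, integral_div, hnum, div_self hD.ne']
end

section
/- Let N = {1,…,N} be a finite index set with weights ω_i > 0 satisfying Σ_{i∈N} ω_i = 1. For each i∈N let γ^i be a class PMF with γ^i(c) > 0 for all c, β^i(·|c) mode PMFs with β^i(m|c) > 0 for all m, and s^i(·|c,m) state PDFs. Define the unnormalized geometric means γ̃(c) := ∏_{i∈N} γ^i(c)^{ω_i}, β̃(m|c) := ∏_{i∈N} β^i(m|c)^{ω_i}, s̃(x|c,m) := ∏_{i∈N} s^i(x|c,m)^{ω_i}, and assume 0 < ∫_{ℝ^n} s̃(x|c,m) dx < ∞ for all c∈C, m∈M_c. Define the fused components s̄(x|c,m) := s̃(x|c,m)/∫ s̃(x'|c,m) dx', β̄(m|c) := β̃(m|c)·∫ s̃(x|c,m) dx / Σ_{m'∈M_c} β̃(m'|c)·∫ s̃(x|c,m') dx, and γ̄(c) := γ̃(c)·Σ_{m∈M_c}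 β̃(m|c)·∫ s̃(x|c,m) dx / Σ_{c'∈C} γ̃(c')·Σ_{m∈M_{c'}} β̃(m|c')·∫ s̃(x|c',m) dx. Then for every x∈ℝ^n, c∈C, m∈M_c, the normalized weighted geometric mean of the joint densities factorizes: ∏_{i∈N} [γ^i(c)·β^i(m|c)·s^i(x|c,m)]^{ω_i} / ( Σ_{c'∈C} Σ_{m'∈M_{c'}} ∫_{ℝ^n} ∏_{i∈N} [γ^i(c')·β^i(m'|c')·s^i(x'|c',m')]^{ω_i} dx' ) = γ̄(c)·β̄(m|c)·s̄(x|c,m). -/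
open MeasureTheory

/-- The normalized weighted geometric mean (GCI fusion) of the joint
class-mode-state densities factorizes into fused class PMF, fused mode PMFs and fused
state PDFs. -/
theorem gci_fusion_factorization
    {C : Type*} [Fintype C] [Nonempty C]
    {M : C → Type*} [∀ c, Fintype (M c)] [∀ c, Nonempty (M c)]
    {ι : Type*} [Fintype ι] [Nonempty ι]
    {n : ℕ}
    -- fusion weights
    (ω : ι → ℝ) (hω0 : ∀ i, 0 < ω i) (hω1 : ∑ i, ω i = 1)
    -- local class PMFs
    (γ : ι → C → ℝ) (hγ0 : ∀ i c, 0 < γ i c) (hγ1 : ∀ i, ∑ c, γ i c = 1)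
    -- local mode PMFs
    (β : ι → (c : C) → M c → ℝ) (hβ0 : ∀ i c m, 0 < β i c m)
    (hβ1 : ∀ i c, ∑ m, β i c m = 1)
    -- local state PDFs
    (s : ι → (c : C) → M c → (Fin n → ℝ) → ℝ)
    (hsmeas : ∀ i c m, Measurable (s i c m)) (hs0 : ∀ i c m x, 0 ≤ s i c m x)
    (hs1 : ∀ i c m, ∫ x, s i c m x = 1)
    -- unnormalized geometric means
    (γt : C → ℝ) (hγt : ∀ c, γt c = ∏ i, (γ i c) ^ (ω i))
    (βt : (c : C) → M c → ℝ) (hβt : ∀ c m, βt c m = ∏ i, (β i c m) ^ (ω i))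
    (st : (c : C) → M c → (Fin n → ℝ) → ℝ)
    (hst : ∀ c m x, st c m x = ∏ i, (s i c m x) ^ (ω i))
    (hstint : ∀ c m, Integrable (st c m))
    (hstpos : ∀ (c : C) (m : M c), 0 < ∫ x, st c m x)
    -- fused state PDFs
    (sbar : (c : C) → M c → (Fin n → ℝ) → ℝ)
    (hsbar : ∀ c m x, sbar c m x = st c m x / ∫ x', st c m x')
    -- fused mode PMFs
    (βbar : (c : C) → M c → ℝ)
    (hβbar : ∀ c m, βbar c m =
      βt c m * (∫ x, st c m x) / ∑ m', βt c m' * ∫ x, st c m' x)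
    -- fused class PMF
    (γbar : C → ℝ)
    (hγbar : ∀ c, γbar c =
      γt c * (∑ m, βt c m * ∫ x, st c m x) /
        ∑ c', γt c' * ∑ m, βt c' m * ∫ x, st c' m x) :
    ∀ (x : Fin n → ℝ) (c : C) (m : M c),
      (∏ i, (γ i c * β i c m * s i c m x) ^ (ω i)) /
        (∑ c', ∑ m', ∫ x', ∏ i, (γ i c' * β i c' m' * s i c' m' x') ^ (ω i)) =
      γbar c * βbar c m * sbar c m x := by
  intro x c m
  -- numerator factorization
  have hnum : ∀ (c : C) (m : M c) (x : Fin n → ℝ),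
      (∏ i, (γ i c * β i c m * s i c m x) ^ (ω i))
        = γt c * βt c m * st c m x := by
    intro c m x
    rw [hγt, hβt, hst, ← Finset.prod_mul_distrib, ← Finset.prod_mul_distrib]
    refine Finset.prod_congr rfl fun i _ => ?_
    rw [Real.mul_rpow (mul_pos (hγ0 i c) (hβ0 i c m)).le (hs0 i c m x),
      Real.mul_rpow (hγ0 i c).le (hβ0 i c m).le]
  have hγtpos : ∀ c, 0 < γt c := fun c => by
    rw [hγt]; exact Finset.prod_pos fun i _ => Real.rpow_pos_of_pos (hγ0 i c) _
  have hβtpos : ∀ c m, 0 < βt c m := fun c m => by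
    rw [hβt]; exact Finset.prod_pos fun i _ => Real.rpow_pos_of_pos (hβ0 i c m) _
  have hden : (∑ c', ∑ m', ∫ x', ∏ i, (γ i c' * β i c' m' * s i c' m' x') ^ (ω i))
      = ∑ c', γt c' * ∑ m', βt c' m' * ∫ x', st c' m' x' := by
    refine Finset.sum_congr rfl fun c' _ => ?_
    rw [Finset.mul_sum]
    refine Finset.sum_congr rfl fun m' _ => ?_
    have : (∫ x', ∏ i, (γ i c' * β i c' m' * s i c' m' x') ^ (ω i))
        = ∫ x', γt c' * βt c' m' * st c' m' x' := by
      congr 1; ext x'; exact hnum c' m' x'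
    rw [this, integral_const_mul]; ring
  have hSpos : ∀ c', 0 < ∑ m', βt c' m' * ∫ x', st c' m' x' :=
    fun c' => Finset.sum_pos (fun m' _ => mul_pos (hβtpos c' m') (hstpos c' m'))
      Finset.univ_nonempty
  have hZpos : 0 < ∑ c', γt c' * ∑ m', βt c' m' * ∫ x', st c' m' x' :=
    Finset.sum_pos (fun c' _ => mul_pos (hγtpos c') (hSpos c')) Finset.univ_nonempty
  rw [hnum, hden, hγbar, hβbar, hsbar, div_mul_div_comm, div_mul_div_comm,
    div_eq_div_iff hZpos.ne'
      (mul_ne_zero (mul_ne_zero hZpos.ne' (hSpos c).ne') (hstpos c m).ne')]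
  ring
end

section
/- Let N = {1,…,N} be a finite index set with weights ω_i > 0 satisfying Σ_{i∈N} ω_i = 1. For each i∈N let r^i ∈ (0,1) be an existence probability, γ^i a class PMF with γ^i(c) > 0 for all c, β^i(·|c) mode PMFs with β^i(m|c) > 0 for all m, and s^i(·|c,m) state PDFs. Define γ̃(c) := ∏_i γ^i(c)^{ω_i}, β̃(m|c) := ∏_i β^i(m|c)^{ω_i}, s̃(x|c,m) := ∏_i s^i(x|c,m)^{ω_i}, assume 0 < ∫ s̃(x|c,m) dx < ∞ for all c, m, and set ζ̃ := ∏_i (1−r^i)^{ω_i}, r̃ := ∏_i (r^i)^{ω_i}, S := Σ_{c∈C} γ̃(c) Σ_{m∈M_c} β̃(m|c) ∫ s̃(x|c,m) dx, C₀ := ζ̃ + r̃·S, and r̄ := r̃·S / (ζ̃ + r̃·S). Then the GCI-fused Bernoulli density is again a Bernoulli density with parameter r̄: (i) ζ̃ / C₀ = 1 − r̄, and (ii) for every x∈ℝ^n, c∈C, m∈M_c, r̃·∏_{i∈N} [γ^i(c)·β^i(m|c)·s^i(x|c,m)]^{ω_i} / C₀ = r̄·γ̄(c)·β̄(m|c)·s̄(x|c,m),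 where γ̄, β̄, s̄ are the fused class PMF, mode PMFs and state PDFs defined by γ̄(c) := γ̃(c)·Σ_{m} β̃(m|c)·∫ s̃(·|c,m) / Σ_{c'} γ̃(c')·Σ_{m} β̃(m|c')·∫ s̃(·|c',m), β̄(m|c) := β̃(m|c)·∫ s̃(·|c,m) / Σ_{m'} β̃(m'|c)·∫ s̃(·|c,m'), s̄(x|c,m) := s̃(x|c,m)/∫ s̃(x'|c,m) dx'. -/
open MeasureTheory

/-- GCI fusion of Bernoulli densities over the augmented class-mode-state
space yields again a Bernoulli density, with fused existence probability
`r̄ = r̃ S / (ζ̃ + r̃ S)` and fused class PMF, mode PMFs and state PDFs. -/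
theorem gci_fusion_bernoulli
    {C : Type*} [Fintype C] [Nonempty C]
    {M : C → Type*} [∀ c, Fintype (M c)] [∀ c, Nonempty (M c)]
    {ι : Type*} [Fintype ι] [Nonempty ι]
    {n : ℕ}
    -- fusion weights
    (ω : ι → ℝ) (hω0 : ∀ i, 0 < ω i) (hω1 : ∑ i, ω i = 1)
    -- local existence probabilities
    (r : ι → ℝ) (hr : ∀ i, r i ∈ Set.Ioo (0 : ℝ) 1)
    -- local class PMFs
    (γ : ι → C → ℝ) (hγ0 : ∀ i c, 0 < γ i c) (hγ1 : ∀ i, ∑ c, γ i c = 1)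
    -- local mode PMFs
    (β : ι → (c : C) → M c → ℝ) (hβ0 : ∀ i c m, 0 < β i c m)
    (hβ1 : ∀ i c, ∑ m, β i c m = 1)
    -- local state PDFs
    (s : ι → (c : C) → M c → (Fin n → ℝ) → ℝ)
    (hsmeas : ∀ i c m, Measurable (s i c m)) (hs0 : ∀ i c m x, 0 ≤ s i c m x)
    (hs1 : ∀ i c m, ∫ x, s i c m x = 1)
    -- unnormalized geometric means
    (γt : C → ℝ) (hγt : ∀ c, γt c = ∏ i, (γ i c) ^ (ω i))
    (βt : (c : C) → M c → ℝ) (hβt : ∀ c m, βt c m = ∏ i, (β i c m) ^ (ω i))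
    (st : (c : C) → M c → (Fin n → ℝ) → ℝ)
    (hst : ∀ c m x, st c m x = ∏ i, (s i c m x) ^ (ω i))
    (hstint : ∀ c m, Integrable (st c m))
    (hstpos : ∀ (c : C) (m : M c), 0 < ∫ x, st c m x)
    (ζt : ℝ) (hζt : ζt = ∏ i, (1 - r i) ^ (ω i))
    (rt : ℝ) (hrt : rt = ∏ i, (r i) ^ (ω i))
    (S : ℝ) (hS : S = ∑ c, γt c * ∑ m, βt c m * ∫ x, st c m x)
    (C₀ : ℝ) (hC₀ : C₀ = ζt + rt * S)
    -- fused existence probability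
    (rbar : ℝ) (hrbar : rbar = rt * S / (ζt + rt * S))
    -- fused state PDFs
    (sbar : (c : C) → M c → (Fin n → ℝ) → ℝ)
    (hsbar : ∀ c m x, sbar c m x = st c m x / ∫ x', st c m x')
    -- fused mode PMFs
    (βbar : (c : C) → M c → ℝ)
    (hβbar : ∀ c m, βbar c m =
      βt c m * (∫ x, st c m x) / ∑ m', βt c m' * ∫ x, st c m' x)
    -- fused class PMF
    (γbar : C → ℝ)
    (hγbar : ∀ c, γbar c =
      γt c * (∑ m, βt c m * ∫ x, st c m x) /
        ∑ c', γt c' * ∑ m, βt c' m * ∫ x, st c' m x) :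
    ζt / C₀ = 1 - rbar ∧
      ∀ (x : Fin n → ℝ) (c : C) (m : M c),
        rt * (∏ i, (γ i c * β i c m * s i c m x) ^ (ω i)) / C₀ =
          rbar * γbar c * βbar c m * sbar c m x := by

  have hγtpos : ∀ c, 0 < γt c := fun c => (hγt c) ▸
    Finset.prod_pos fun i _ => Real.rpow_pos_of_pos (hγ0 i c) _
  have hβtpos : ∀ c m, 0 < βt c m := fun c m => (hβt c m) ▸
    Finset.prod_pos fun i _ => Real.rpow_pos_of_pos (hβ0 i c m) _
  have hrtpos : 0 < rt := hrt ▸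
    Finset.prod_pos fun i _ => Real.rpow_pos_of_pos (hr i).1 _
  have hζtpos : 0 < ζt := hζt ▸
    Finset.prod_pos fun i _ => Real.rpow_pos_of_pos (by linarith [(hr i).2]) _
  have hApos : ∀ c, 0 < ∑ m, βt c m * ∫ x, st c m x := fun c =>
    Finset.sum_pos (fun m _ => mul_pos (hβtpos c m) (hstpos c m)) Finset.univ_nonempty
  have hSpos : 0 < S := hS ▸
    Finset.sum_pos (fun c _ => mul_pos (hγtpos c) (hApos c)) Finset.univ_nonempty
  have hC₀pos : 0 < C₀ := hC₀ ▸ add_pos hζtpos (mul_pos hrtpos hSpos)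
  constructor
  · rw [hrbar, ← hC₀, hC₀]
    field_simp
    ring
  · intro x c m
    have hprod : (∏ i, (γ i c * β i c m * s i c m x) ^ (ω i))
        = γt c * βt c m * st c m x := by
      rw [hγt, hβt, hst, ← Finset.prod_mul_distrib, ← Finset.prod_mul_distrib]
      refine Finset.prod_congr rfl fun i _ => ?_
      rw [Real.mul_rpow (mul_nonneg (hγ0 i c).le (hβ0 i c m).le) (hs0 i c m x),
        Real.mul_rpow (le_of_lt (hγ0 i c)) (le_of_lt (hβ0 i c m))]
    rw [hprod, hrbar, hγbar, hβbar, hsbar, ← hS, ← hC₀]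
    have h1 : (∫ x', st c m x') ≠ 0 := ne_of_gt (hstpos c m)
    have h2 : (∑ m', βt c m' * ∫ x, st c m' x) ≠ 0 := ne_of_gt (hApos c)
    have h3 : S ≠ 0 := ne_of_gt hSpos
    have h4 : C₀ ≠ 0 := ne_of_gt hC₀pos
    field_simp
end

section
/- Let μ₁, μ₂ ∈ ℝ^n, let P₁, P₂ ∈ ℝ^{n×n} be symmetric positive definite, and let ω ∈ (0,1). Define P̄ := (ω P₁^{−1} + (1−ω) P₂^{−1})^{−1} and μ̄ := P̄ (ω P₁^{−1} μ₁ + (1−ω) P₂^{−1} μ₂). Then P̄ is symmetric positive definite and for every x ∈ ℝ^n the weighted geometric mean of the two Gaussian densities satisfies N(x; μ₁, P₁)^ω · N(x; μ₂, P₂)^{1−ω} = ε(ω, P₁) · ε(1−ω, P₂) · N(μ₁ − μ₂; 0, ω^{−1}P₁ + (1−ω)^{−1}P₂) · N(x; μ̄, P̄), where ε(ω, P) := sqrt( det(2π ω^{−1} P) · (det(2π P))^{−ω} ). -/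
open Matrix Real

/-- The `n`-dimensional Gaussian density with mean `μ` and covariance `P`. -/
noncomputable def gaussianPdf {n : ℕ} (μ : Fin n → ℝ) (P : Matrix (Fin n) (Fin n) ℝ)
    (x : Fin n → ℝ) : ℝ :=
  (2 * Real.pi) ^ (-(n : ℝ) / 2) * P.det ^ (-(1 : ℝ) / 2) *
    Real.exp (-(1 / 2) * ((x - μ) ⬝ᵥ (P⁻¹ *ᵥ (x - μ))))

/-- The constant `ε(ω, P) = sqrt( det(2π ω⁻¹ P) · det(2π P)^(−ω) )`. -/
noncomputable def epsConst {n : ℕ} (ω : ℝ) (P : Matrix (Fin n) (Fin n) ℝ) : ℝ :=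
  Real.sqrt (((2 * Real.pi) • (ω⁻¹ • P)).det * ((2 * Real.pi) • P).det ^ (-ω))

lemma myPosDef_smul {n : ℕ} {M : Matrix (Fin n) (Fin n) ℝ} (hM : M.PosDef) {c : ℝ}
    (hc : 0 < c) : (c • M).PosDef := by
  refine ⟨?_, fun x hx => ?_⟩
  · show (c • M)ᴴ = c • M
    rw [Matrix.conjTranspose_smul, hM.1]
    simp
  · simpa [Finsupp.mul_sum, mul_assoc, mul_left_comm] using smul_pos hc (hM.2 hx)

lemma mySwap {n : ℕ} {M : Matrix (Fin n) (Fin n) ℝ} (hM : Mᵀ = M) (u v : Fin n → ℝ) :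
    u ⬝ᵥ (M *ᵥ v) = v ⬝ᵥ (M *ᵥ u) := by
  rw [Matrix.dotProduct_mulVec, ← Matrix.mulVec_transpose, hM, dotProduct_comm]

lemma myShift {n : ℕ} (M : Matrix (Fin n) (Fin n) ℝ) (u v : Fin n → ℝ) :
    (M *ᵥ u) ⬝ᵥ v = u ⬝ᵥ (Mᵀ *ᵥ v) := by
  rw [dotProduct_comm, Matrix.dotProduct_mulVec, ← Matrix.mulVec_transpose, dotProduct_comm]

/-- The weighted geometric mean of two Gaussian densities is, up to an
explicit constant, again a Gaussian density (the single-component GCI fusion identity). -/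
theorem gaussian_geometric_mean
    {n : ℕ} (μ₁ μ₂ : Fin n → ℝ) (P₁ P₂ : Matrix (Fin n) (Fin n) ℝ)
    (hP₁ : P₁.PosDef) (hP₂ : P₂.PosDef)
    (ω : ℝ) (hω : ω ∈ Set.Ioo (0 : ℝ) 1)
    (Pbar : Matrix (Fin n) (Fin n) ℝ)
    (hPbar : Pbar = (ω • P₁⁻¹ + (1 - ω) • P₂⁻¹)⁻¹)
    (μbar : Fin n → ℝ)
    (hμbar : μbar = Pbar *ᵥ (ω • (P₁⁻¹ *ᵥ μ₁) + (1 - ω) • (P₂⁻¹ *ᵥ μ₂))) :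
    Pbar.PosDef ∧
      ∀ x : Fin n → ℝ,
        gaussianPdf μ₁ P₁ x ^ ω * gaussianPdf μ₂ P₂ x ^ (1 - ω) =
          epsConst ω P₁ * epsConst (1 - ω) P₂ *
            gaussianPdf 0 (ω⁻¹ • P₁ + (1 - ω)⁻¹ • P₂) (μ₁ - μ₂) *
            gaussianPdf μbar Pbar x := by
  obtain ⟨hω0, hω1⟩ := hω
  have h1ω : 0 < 1 - ω := by linarith
  set S : Matrix (Fin n) (Fin n) ℝ := ω • P₁⁻¹ + (1 - ω) • P₂⁻¹ with hSdef
  have hA : P₁⁻¹.PosDef := hP₁.inv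
  have hB : P₂⁻¹.PosDef := hP₂.inv
  have hS : S.PosDef := (myPosDef_smul hA hω0).add (myPosDef_smul hB h1ω)
  have hPb : Pbar.PosDef := by rw [hPbar]; exact hS.inv
  have hdS : IsUnit S.det := hS.det_pos.ne'.isUnit
  have hSP : S * Pbar = 1 := by rw [hPbar]; exact Matrix.mul_nonsing_inv _ hdS
  have hPS : Pbar * S = 1 := by rw [hPbar]; exact Matrix.nonsing_inv_mul _ hdS
  have hPbarInv : Pbar⁻¹ = S := Matrix.inv_eq_right_inv hPS
  have hP1 : P₁ * P₁⁻¹ = 1 := Matrix.mul_nonsing_inv _ hP₁.det_pos.ne'.isUnit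
  have hP2 : P₂ * P₂⁻¹ = 1 := Matrix.mul_nonsing_inv _ hP₂.det_pos.ne'.isUnit
  -- Q facts
  set Q : Matrix (Fin n) (Fin n) ℝ := ω • P₂ + (1 - ω) • P₁ with hQdef
  have hQB : Q * P₂⁻¹ = P₁ * S := by
    rw [hQdef, hSdef]
    simp only [Matrix.add_mul, Matrix.mul_add, Matrix.smul_mul, Matrix.mul_smul, hP1, hP2]
  have hQA : Q * P₁⁻¹ = P₂ * S := by
    rw [hQdef, hSdef]
    simp only [Matrix.add_mul, Matrix.mul_add, Matrix.smul_mul, Matrix.mul_smul, hP1, hP2]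
  have hQ1 : Q * (P₂⁻¹ * (Pbar * P₁⁻¹)) = 1 := by
    rw [← Matrix.mul_assoc, hQB, Matrix.mul_assoc P₁ S _, ← Matrix.mul_assoc S, hSP,
      Matrix.one_mul, hP1]
  have hQ2 : Q * (P₁⁻¹ * (Pbar * P₂⁻¹)) = 1 := by
    rw [← Matrix.mul_assoc, hQA, Matrix.mul_assoc P₂ S _, ← Matrix.mul_assoc S, hSP,
      Matrix.one_mul, hP2]
  have hK : P₁⁻¹ * (Pbar * P₂⁻¹) = P₂⁻¹ * (Pbar * P₁⁻¹) := by
    rw [← Matrix.inv_eq_right_inv hQ2, ← Matrix.inv_eq_right_inv hQ1]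
  -- C facts
  set C : Matrix (Fin n) (Fin n) ℝ := ω⁻¹ • P₁ + (1 - ω)⁻¹ • P₂ with hCdef
  have hωω : ω * (1 - ω) ≠ 0 := by positivity
  have hCQ : C = (ω * (1 - ω))⁻¹ • Q := by
    rw [hCdef, hQdef, smul_add, smul_smul, smul_smul]
    rw [show (ω * (1-ω))⁻¹ * ω = (1-ω)⁻¹ by field_simp,
        show (ω * (1-ω))⁻¹ * (1-ω) = ω⁻¹ by field_simp]
    abel
  have hCK : C * ((ω * (1 - ω)) • (P₂⁻¹ * (Pbar * P₁⁻¹))) = 1 := by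
    rw [hCQ, Matrix.smul_mul, Matrix.mul_smul, smul_smul, inv_mul_cancel₀ hωω, one_smul, hQ1]
  have hCinv : C⁻¹ = (ω * (1 - ω)) • (P₂⁻¹ * (Pbar * P₁⁻¹)) := Matrix.inv_eq_right_inv hCK
  have hC : C.PosDef := (myPosDef_smul hP₁ (by positivity)).add (myPosDef_smul hP₂ (by positivity))
  -- determinant relation
  have hdetB : (P₂⁻¹).det = (P₂.det)⁻¹ := by
    rw [Matrix.det_nonsing_inv, Ring.inverse_eq_inv']
  have hdetA : (P₁⁻¹).det = (P₁.det)⁻¹ := by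
    rw [Matrix.det_nonsing_inv, Ring.inverse_eq_inv']
  have hdetPb : 0 < Pbar.det := hPb.det_pos
  have hdc : C.det = (P₁.det * P₂.det) / ((ω * (1 - ω)) ^ n * Pbar.det) := by
    have h := congrArg Matrix.det hCK
    rw [Matrix.det_mul, Matrix.det_smul, Matrix.det_mul, Matrix.det_mul, Matrix.det_one,
      hdetA, hdetB, Fintype.card_fin] at h
    have h1 : P₁.det ≠ 0 := hP₁.det_pos.ne'
    have h2 : P₂.det ≠ 0 := hP₂.det_pos.ne'
    have h3 : (ω * (1 - ω)) ^ n ≠ 0 := pow_ne_zero _ hωω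
    field_simp at h ⊢
    linarith [h]
  have hAsym : (P₁⁻¹)ᵀ = P₁⁻¹ := by
    rw [← Matrix.conjTranspose_eq_transpose_of_trivial]; exact hA.1
  have hBsym : (P₂⁻¹)ᵀ = P₂⁻¹ := by
    rw [← Matrix.conjTranspose_eq_transpose_of_trivial]; exact hB.1
  have hPbsym : Pbarᵀ = Pbar := by
    rw [← Matrix.conjTranspose_eq_transpose_of_trivial]; exact hPb.1
  have hμ1' : Pbar *ᵥ (S *ᵥ μ₁) = μ₁ := by
    rw [Matrix.mulVec_mulVec, hPS, Matrix.one_mulVec]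
  have hμ2' : Pbar *ᵥ (S *ᵥ μ₂) = μ₂ := by
    rw [Matrix.mulVec_mulVec, hPS, Matrix.one_mulVec]
  refine ⟨hPb, fun x => ?_⟩
  have hx1 : x - μ₁ = (x - μbar) - (1 - ω) • (Pbar *ᵥ (P₂⁻¹ *ᵥ (μ₁ - μ₂))) := by
    have e : ω • (P₁⁻¹ *ᵥ μ₁) + (1 - ω) • (P₂⁻¹ *ᵥ μ₂)
        = S *ᵥ μ₁ - (1 - ω) • (P₂⁻¹ *ᵥ (μ₁ - μ₂)) := by
      rw [hSdef]
      simp only [Matrix.add_mulVec, Matrix.smul_mulVec, Matrix.mulVec_sub]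
      module
    rw [hμbar, e, Matrix.mulVec_sub, hμ1', Matrix.mulVec_smul]
    abel
  have hx2 : x - μ₂ = (x - μbar) + ω • (Pbar *ᵥ (P₁⁻¹ *ᵥ (μ₁ - μ₂))) := by
    have e : ω • (P₁⁻¹ *ᵥ μ₁) + (1 - ω) • (P₂⁻¹ *ᵥ μ₂)
        = S *ᵥ μ₂ + ω • (P₁⁻¹ *ᵥ (μ₁ - μ₂)) := by
      rw [hSdef]
      simp only [Matrix.add_mulVec, Matrix.smul_mulVec, Matrix.mulVec_sub]
      module
    rw [hμbar, e, Matrix.mulVec_add, hμ2', Matrix.mulVec_smul]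
    abel
  have hq : ω * ((x - μ₁) ⬝ᵥ (P₁⁻¹ *ᵥ (x - μ₁))) + (1 - ω) * ((x - μ₂) ⬝ᵥ (P₂⁻¹ *ᵥ (x - μ₂)))
      = (μ₁ - μ₂) ⬝ᵥ (C⁻¹ *ᵥ (μ₁ - μ₂)) + (x - μbar) ⬝ᵥ (Pbar⁻¹ *ᵥ (x - μbar)) := by
    rw [hx1, hx2, hCinv, hPbarInv, hSdef]
    set d : Fin n → ℝ := μ₁ - μ₂ with hd
    set r : Fin n → ℝ := x - μbar with hr
    have hPBt : (Pbar * P₂⁻¹)ᵀ = P₂⁻¹ * Pbar := by rw [Matrix.transpose_mul, hBsym, hPbsym]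
    have hPAt : (Pbar * P₁⁻¹)ᵀ = P₁⁻¹ * Pbar := by rw [Matrix.transpose_mul, hAsym, hPbsym]
    have s1 : ((Pbar * P₂⁻¹) *ᵥ d) ⬝ᵥ (P₁⁻¹ *ᵥ r) = r ⬝ᵥ ((P₂⁻¹ * (Pbar * P₁⁻¹)) *ᵥ d) := by
      rw [mySwap hAsym, Matrix.mulVec_mulVec, hK]
    have s2 : ((Pbar * P₁⁻¹) *ᵥ d) ⬝ᵥ (P₂⁻¹ *ᵥ r) = r ⬝ᵥ ((P₂⁻¹ * (Pbar * P₁⁻¹)) *ᵥ d) := by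
      rw [mySwap hBsym, Matrix.mulVec_mulVec]
    have s3 : ((Pbar * P₂⁻¹) *ᵥ d) ⬝ᵥ ((P₂⁻¹ * (Pbar * P₁⁻¹)) *ᵥ d)
        = d ⬝ᵥ ((P₂⁻¹ * Pbar * (P₂⁻¹ * (Pbar * P₁⁻¹))) *ᵥ d) := by
      rw [myShift, hPBt, Matrix.mulVec_mulVec]
    have s4 : ((Pbar * P₁⁻¹) *ᵥ d) ⬝ᵥ ((P₂⁻¹ * (Pbar * P₁⁻¹)) *ᵥ d)
        = d ⬝ᵥ ((P₁⁻¹ * Pbar * (P₂⁻¹ * (Pbar * P₁⁻¹))) *ᵥ d) := by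
      rw [myShift, hPAt, Matrix.mulVec_mulVec]
    have hMT : (1 - ω) • (P₂⁻¹ * Pbar * (P₂⁻¹ * (Pbar * P₁⁻¹)))
        + ω • (P₁⁻¹ * Pbar * (P₂⁻¹ * (Pbar * P₁⁻¹)))
        = P₂⁻¹ * (Pbar * P₁⁻¹) := by
      have h3 : (1 - ω) • (P₂⁻¹ * Pbar * (P₂⁻¹ * (Pbar * P₁⁻¹)))
          + ω • (P₁⁻¹ * Pbar * (P₂⁻¹ * (Pbar * P₁⁻¹)))
          = S * Pbar * (P₂⁻¹ * (Pbar * P₁⁻¹)) := by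
        rw [hSdef]
        simp only [Matrix.add_mul, Matrix.smul_mul]
        abel
      rw [h3, hSP, Matrix.one_mul]
    have s6 : (1 - ω) * (d ⬝ᵥ ((P₂⁻¹ * Pbar * (P₂⁻¹ * (Pbar * P₁⁻¹))) *ᵥ d))
        + ω * (d ⬝ᵥ ((P₁⁻¹ * Pbar * (P₂⁻¹ * (Pbar * P₁⁻¹))) *ᵥ d))
        = d ⬝ᵥ ((P₂⁻¹ * (Pbar * P₁⁻¹)) *ᵥ d) := by
      have := congrArg (fun M : Matrix (Fin n) (Fin n) ℝ => d ⬝ᵥ (M *ᵥ d)) hMT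
      simpa only [Matrix.add_mulVec, Matrix.smul_mulVec, dotProduct_add,
        dotProduct_smul, smul_eq_mul] using this
    simp only [Matrix.mulVec_sub, Matrix.mulVec_add, Matrix.mulVec_smul, dotProduct_sub,
      sub_dotProduct, dotProduct_add, add_dotProduct, smul_dotProduct, dotProduct_smul,
      Matrix.smul_mulVec, Matrix.add_mulVec, Matrix.mulVec_mulVec, smul_eq_mul]
    rw [hK, s1, s2, s3, s4]
    linear_combination (ω * (1 - ω)) * s6
  -- final assembly
  have hπ : (0:ℝ) < 2 * Real.pi := by positivity
  have hgauss : ∀ (μ : Fin n → ℝ) (P : Matrix (Fin n) (Fin n) ℝ), 0 < P.det →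
      ∀ y : Fin n → ℝ, gaussianPdf μ P y
        = Real.exp (Real.log (2 * Real.pi) * (-(n:ℝ)/2) + Real.log P.det * (-(1:ℝ)/2)
            + (-(1/2) * ((y - μ) ⬝ᵥ (P⁻¹ *ᵥ (y - μ))))) := by
    intro μ P hP y
    rw [gaussianPdf, Real.rpow_def_of_pos hπ, Real.rpow_def_of_pos hP,
      ← Real.exp_add, ← Real.exp_add]
  have heps : ∀ (c : ℝ) (P : Matrix (Fin n) (Fin n) ℝ), 0 < c → 0 < P.det →
      epsConst c P = Real.exp ((((n:ℝ) * Real.log (2 * Real.pi) - (n:ℝ) * Real.log c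
          + Real.log P.det)
          + (-c) * ((n:ℝ) * Real.log (2 * Real.pi) + Real.log P.det)) * (1/2)) := by
    intro c P hc hP
    rw [epsConst, smul_smul, Matrix.det_smul, Matrix.det_smul, Fintype.card_fin]
    have h1 : (0:ℝ) < (2 * Real.pi * c⁻¹) ^ n * P.det := by positivity
    have h2 : (0:ℝ) < (2 * Real.pi) ^ n * P.det := by positivity
    have h3 : (0:ℝ) < ((2 * Real.pi) ^ n * P.det) ^ (-c) := Real.rpow_pos_of_pos h2 _
    rw [Real.sqrt_eq_rpow, Real.rpow_def_of_pos (by positivity)]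
    congr 1
    rw [Real.log_mul h1.ne' h3.ne', Real.log_rpow h2,
      Real.log_mul (by positivity) hP.ne', Real.log_pow,
      Real.log_mul (by positivity) (inv_ne_zero hc.ne'), Real.log_inv,
      Real.log_mul (by positivity) hP.ne', Real.log_pow]
    ring
  have hlogdc : Real.log C.det = Real.log P₁.det + Real.log P₂.det
      - ((n:ℝ) * Real.log ω + (n:ℝ) * Real.log (1 - ω) + Real.log Pbar.det) := by
    rw [hdc, Real.log_div (mul_pos hP₁.det_pos hP₂.det_pos).ne'
        (mul_pos (pow_pos (mul_pos hω0 h1ω) n) hdetPb).ne',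
      Real.log_mul hP₁.det_pos.ne' hP₂.det_pos.ne',
      Real.log_mul (pow_pos (mul_pos hω0 h1ω) n).ne' hdetPb.ne', Real.log_pow,
      Real.log_mul hω0.ne' h1ω.ne']
    ring
  rw [hgauss μ₁ P₁ hP₁.det_pos x, hgauss μ₂ P₂ hP₂.det_pos x,
    hgauss 0 C hC.det_pos (μ₁ - μ₂), hgauss μbar Pbar hPb.det_pos x,
    heps ω P₁ hω0 hP₁.det_pos, heps (1 - ω) P₂ h1ω hP₂.det_pos,
    ← Real.exp_mul, ← Real.exp_mul, ← Real.exp_add, ← Real.exp_add, ← Real.exp_add, ← Real.exp_add,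
    Real.exp_eq_exp]
  simp only [sub_zero]
  linear_combination (-(1:ℝ)/2) * hq + ((1:ℝ)/2) * hlogdc
end

section
/- Let s'(x) := Σ_{j=1}^{J} α_j N(x; μ_j, P_j) be a Gaussian-mixture prior on ℝ^n with α_j ≥ 0, Σ_j α_j = 1, and P_j symmetric positive definite. Let H ∈ ℝ^{p×n}, R ∈ ℝ^{p×p} symmetric positive definite, p_D ∈ [0,1] a detection probability, Z ⊂ ℝ^p a finite set of measurements, and κ(z) > 0 a clutter intensity for each z ∈ Z. Define the detection-and-clutter likelihood ℓ(x) := (1 − p_D) + p_D Σ_{z∈Z} N(z; H x, R)/κ(z), and for each j set S_j := R + H P_j Hᵀ, K_j := P_j Hᵀ S_j^{−1}, μ_j(z) := μ_j + K_j(z − H μ_j), P'_j := (I − K_j H) P_j, and α_j(z) := α_j · N(z; H μ_j, S_j)/κ(z). Then for every x ∈ ℝ^n the unnormalized posterior is again a Gaussian mixture: s'(x)·ℓ(x) = (1 − p_D) Σ_{j=1}^{J} α_j N(x; μ_j, P_j) + p_D Σ_{z∈Z} Σ_{j=1}^{J} α_j(z) N(x; μ_j(z), P'_j). -/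
open Matrix Real

lemma dp_trans {m k : ℕ} (A : Matrix (Fin m) (Fin k) ℝ) (v : Fin m → ℝ) (w : Fin k → ℝ) :
    v ⬝ᵥ (A *ᵥ w) = (Aᵀ *ᵥ v) ⬝ᵥ w := by
  rw [Matrix.dotProduct_mulVec, Matrix.mulVec_transpose]

lemma dp_trans' {m k : ℕ} (A : Matrix (Fin m) (Fin k) ℝ) (v : Fin k → ℝ) (w : Fin m → ℝ) :
    (A *ᵥ v) ⬝ᵥ w = v ⬝ᵥ (Aᵀ *ᵥ w) := by
  rw [dotProduct_comm, dp_trans, dotProduct_comm]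

lemma quad_sub {m : ℕ} (M : Matrix (Fin m) (Fin m) ℝ) (hM : Mᵀ = M) (a b : Fin m → ℝ) :
    (a - b) ⬝ᵥ (M *ᵥ (a - b))
      = a ⬝ᵥ (M *ᵥ a) - 2 * (a ⬝ᵥ (M *ᵥ b)) + b ⬝ᵥ (M *ᵥ b) := by
  have h : b ⬝ᵥ (M *ᵥ a) = a ⬝ᵥ (M *ᵥ b) := by
    rw [dp_trans, hM, dotProduct_comm]
  simp [Matrix.mulVec_sub, sub_dotProduct, dotProduct_sub, h]
  ring

lemma gauss_prod {n p : ℕ} (P : Matrix (Fin n) (Fin n) ℝ) (hP : P.PosDef)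
    (R : Matrix (Fin p) (Fin p) ℝ) (hR : R.PosDef) (H : Matrix (Fin p) (Fin n) ℝ)
    (μ : Fin n → ℝ) (z : Fin p → ℝ) (x : Fin n → ℝ) :
    gaussianPdf μ P x * gaussianPdf (H *ᵥ x) R z
      = gaussianPdf (H *ᵥ μ) (R + H * P * Hᵀ) z *
        gaussianPdf (μ + (P * Hᵀ * (R + H * P * Hᵀ)⁻¹) *ᵥ (z - H *ᵥ μ))
          ((1 - P * Hᵀ * (R + H * P * Hᵀ)⁻¹ * H) * P) x := by
  set S : Matrix (Fin p) (Fin p) ℝ := R + H * P * Hᵀ with hSdef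
  set K : Matrix (Fin n) (Fin p) ℝ := P * Hᵀ * S⁻¹ with hKdef
  set M : Matrix (Fin n) (Fin n) ℝ := P⁻¹ + Hᵀ * R⁻¹ * H with hMdef
  set P' : Matrix (Fin n) (Fin n) ℝ := (1 - K * H) * P with hP'def
  -- basic positivity / invertibility
  have hHPHt : (H * P * Hᵀ).PosSemidef := by
    have := hP.posSemidef.mul_mul_conjTranspose_same H
    simpa [Matrix.conjTranspose_eq_transpose_of_trivial] using this
  have hS : S.PosDef := hR.add_posSemidef hHPHt
  have hSdet : IsUnit S.det := isUnit_iff_ne_zero.mpr hS.det_pos.ne'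
  have hPdet : IsUnit P.det := isUnit_iff_ne_zero.mpr hP.det_pos.ne'
  have hRdet : IsUnit R.det := isUnit_iff_ne_zero.mpr hR.det_pos.ne'
  have hSS : S * S⁻¹ = 1 := Matrix.mul_nonsing_inv S hSdet
  have hSS' : S⁻¹ * S = 1 := Matrix.nonsing_inv_mul S hSdet
  have hPP : P⁻¹ * P = 1 := Matrix.nonsing_inv_mul P hPdet
  have hRR : R * R⁻¹ = 1 := Matrix.mul_nonsing_inv R hRdet
  have hRR' : R⁻¹ * R = 1 := Matrix.nonsing_inv_mul R hRdet
  -- cancellation helpers (right-assoc normal form)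
  have cP : ∀ {m : ℕ} (A : Matrix (Fin n) (Fin m) ℝ), P⁻¹ * (P * A) = A := fun A => by
    rw [← Matrix.mul_assoc, hPP, Matrix.one_mul]
  have cR : ∀ {m : ℕ} (A : Matrix (Fin p) (Fin m) ℝ), R⁻¹ * (R * A) = A := fun A => by
    rw [← Matrix.mul_assoc, hRR', Matrix.one_mul]
  have cRi : ∀ {m : ℕ} (A : Matrix (Fin p) (Fin m) ℝ), R * (R⁻¹ * A) = A := fun A => by
    rw [← Matrix.mul_assoc, hRR, Matrix.one_mul]
  have cS : ∀ {m : ℕ} (A : Matrix (Fin p) (Fin m) ℝ), S⁻¹ * (S * A) = A := fun A => by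
    rw [← Matrix.mul_assoc, hSS', Matrix.one_mul]
  have cSi : ∀ {m : ℕ} (A : Matrix (Fin p) (Fin m) ℝ), S * (S⁻¹ * A) = A := fun A => by
    rw [← Matrix.mul_assoc, hSS, Matrix.one_mul]
  -- symmetry facts
  have hPt : Pᵀ = P := hP.isHermitian.eq
  have hRt : Rᵀ = R := hR.isHermitian.eq
  have hSt : Sᵀ = S := hS.isHermitian.eq
  have hPit : (P⁻¹)ᵀ = P⁻¹ := by rw [Matrix.transpose_nonsing_inv, hPt]
  have hRit : (R⁻¹)ᵀ = R⁻¹ := by rw [Matrix.transpose_nonsing_inv, hRt]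
  have hSit : (S⁻¹)ᵀ = S⁻¹ := by rw [Matrix.transpose_nonsing_inv, hSt]
  have hMt : Mᵀ = M := by
    simp [hMdef, Matrix.transpose_add, Matrix.transpose_mul, hPit, hRit, Matrix.mul_assoc]
  -- key matrix identities
  have hMPHt : M * (P * Hᵀ) = Hᵀ * (R⁻¹ * S) := by
    simp only [hMdef, hSdef, Matrix.add_mul, Matrix.mul_add, Matrix.mul_assoc, hRR', hPP,
      Matrix.mul_one, Matrix.one_mul, cP]
  have cancelS : ∀ (X Y : Matrix (Fin n) (Fin p) ℝ), X * S = Y * S → X = Y := by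
    intro X Y h
    have h2 := congrArg (· * S⁻¹) h
    simpa only [Matrix.mul_assoc, hSS, Matrix.mul_one] using h2
  have hMK : M * K = Hᵀ * R⁻¹ := by
    apply cancelS
    simp only [hKdef, Matrix.mul_assoc, hSS', Matrix.mul_one, hMPHt]
  have hMKgen : ∀ {m : ℕ} (A : Matrix (Fin p) (Fin m) ℝ), M * (K * A) = Hᵀ * (R⁻¹ * A) :=
    fun A => by rw [← Matrix.mul_assoc, hMK, Matrix.mul_assoc]
  have hMP' : M * P' = 1 := by
    have hMP : M * P = 1 + Hᵀ * (R⁻¹ * (H * P)) := by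
      simp only [hMdef, Matrix.add_mul, hPP, Matrix.mul_assoc]
    calc M * P' = M * P - M * (K * (H * P)) := by
          rw [hP'def, Matrix.sub_mul, Matrix.one_mul, Matrix.mul_sub, Matrix.mul_assoc]
      _ = 1 := by rw [hMP, hMKgen]; abel
  have hP't : P'ᵀ = P' := by
    have h1 : P' = P - P * (Hᵀ * (S⁻¹ * (H * P))) := by
      rw [hP'def, hKdef]
      simp only [Matrix.sub_mul, Matrix.one_mul, Matrix.mul_assoc]
    rw [h1]
    simp only [Matrix.transpose_sub, Matrix.transpose_mul, hPt, hSit,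
      Matrix.transpose_transpose, Matrix.mul_assoc]
  have hP'M : P' * M = 1 := by
    have := congrArg Matrix.transpose hMP'
    simpa [Matrix.transpose_mul, hMt, hP't] using this
  have hP'inv : P'⁻¹ = M := Matrix.inv_eq_right_inv hP'M
  have hKt : Kᵀ = S⁻¹ * (H * P) := by
    simp [hKdef, Matrix.transpose_mul, hPt, hSit, Matrix.mul_assoc]
  have hSinvid : S⁻¹ + S⁻¹ * (H * (P * (Hᵀ * R⁻¹))) = R⁻¹ := by
    have : S⁻¹ * (S * R⁻¹) = R⁻¹ := cS _
    calc S⁻¹ + S⁻¹ * (H * (P * (Hᵀ * R⁻¹)))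
        = S⁻¹ * (S * R⁻¹) := by
          rw [hSdef]
          simp only [Matrix.add_mul, Matrix.mul_add, Matrix.mul_assoc, cRi, hRR,
            Matrix.mul_one]
      _ = R⁻¹ := this
  -- determinant identity
  have hdet : S.det * P'.det = R.det * P.det := by
    have h1 : S = R * (1 + R⁻¹ * (H * (P * Hᵀ))) := by
      rw [hSdef]
      simp only [Matrix.mul_add, Matrix.mul_one, cRi, Matrix.mul_assoc]
    have h2 : S.det = R.det * (M * P).det := by
      rw [h1, Matrix.det_mul]
      congr 1
      have e : (1 : Matrix (Fin p) (Fin p) ℝ) + R⁻¹ * (H * (P * Hᵀ))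
          = 1 + (R⁻¹ * (H * P)) * Hᵀ := by simp only [Matrix.mul_assoc]
      rw [e, Matrix.det_one_add_mul_comm]
      congr 1
      simp only [hMdef, Matrix.add_mul, hPP, Matrix.mul_assoc]
    have h3 : M.det * P'.det = 1 := by
      rw [← Matrix.det_mul, hMP', Matrix.det_one]
    calc S.det * P'.det = R.det * (M.det * P.det) * P'.det := by
          rw [h2, Matrix.det_mul]
      _ = R.det * P.det * (M.det * P'.det) := by ring
      _ = R.det * P.det := by rw [h3, mul_one]
  -- quadratic form identity
  set u : Fin n → ℝ := x - μ with hu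
  set w : Fin p → ℝ := z - H *ᵥ μ with hw
  have hzHx : z - H *ᵥ x = w - H *ᵥ u := by
    simp [hw, hu, Matrix.mulVec_sub]
  have hxμ' : x - (μ + K *ᵥ w) = u - K *ᵥ w := by
    simp [hu]; abel
  have hquad : u ⬝ᵥ (P⁻¹ *ᵥ u) + (w - H *ᵥ u) ⬝ᵥ (R⁻¹ *ᵥ (w - H *ᵥ u))
      = w ⬝ᵥ (S⁻¹ *ᵥ w) + (u - K *ᵥ w) ⬝ᵥ (M *ᵥ (u - K *ᵥ w)) := by
    rw [quad_sub R⁻¹ hRit w (H *ᵥ u), quad_sub M hMt u (K *ᵥ w)]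
    have e1 : (H *ᵥ u) ⬝ᵥ (R⁻¹ *ᵥ (H *ᵥ u)) = u ⬝ᵥ ((Hᵀ * (R⁻¹ * H)) *ᵥ u) := by
      simp only [dp_trans', Matrix.mulVec_mulVec, Matrix.mul_assoc]
    have e2 : w ⬝ᵥ (R⁻¹ *ᵥ (H *ᵥ u)) = u ⬝ᵥ ((Hᵀ * R⁻¹) *ᵥ w) := by
      rw [Matrix.mulVec_mulVec, dp_trans, Matrix.transpose_mul, hRit,
        dotProduct_comm ((Hᵀ * R⁻¹) *ᵥ w) u]
    have e3 : u ⬝ᵥ (M *ᵥ (K *ᵥ w)) = u ⬝ᵥ ((Hᵀ * R⁻¹) *ᵥ w) := by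
      rw [Matrix.mulVec_mulVec, hMK]
    have e4 : u ⬝ᵥ (M *ᵥ u) = u ⬝ᵥ (P⁻¹ *ᵥ u) + u ⬝ᵥ ((Hᵀ * (R⁻¹ * H)) *ᵥ u) := by
      rw [hMdef, Matrix.add_mulVec, dotProduct_add, Matrix.mul_assoc]
    have e5 : (K *ᵥ w) ⬝ᵥ (M *ᵥ (K *ᵥ w)) = w ⬝ᵥ ((Kᵀ * (M * K)) *ᵥ w) := by
      simp only [dp_trans', Matrix.mulVec_mulVec, Matrix.mul_assoc]
    have e6 : w ⬝ᵥ (S⁻¹ *ᵥ w) + w ⬝ᵥ ((Kᵀ * (M * K)) *ᵥ w) = w ⬝ᵥ (R⁻¹ *ᵥ w) := by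
      rw [← dotProduct_add, ← Matrix.add_mulVec, hMK, hKt,
        show S⁻¹ * (H * P) * (Hᵀ * R⁻¹) = S⁻¹ * (H * (P * (Hᵀ * R⁻¹))) from by
          simp only [Matrix.mul_assoc],
        hSinvid]
    rw [e1, e2, e3, e4, e5]
    linarith [e6]
  -- determinant positivity and rpow
  have hP'detpos : (0 : ℝ) < P'.det := by
    have h : P'.det = R.det * P.det / S.det := by
      rw [eq_div_iff hS.det_pos.ne']
      linear_combination hdet
    rw [h]
    exact div_pos (mul_pos hR.det_pos hP.det_pos) hS.det_pos
  have hdetpow : P.det ^ (-(1:ℝ)/2) * R.det ^ (-(1:ℝ)/2)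
      = S.det ^ (-(1:ℝ)/2) * P'.det ^ (-(1:ℝ)/2) := by
    rw [← Real.mul_rpow hP.det_pos.le hR.det_pos.le,
      ← Real.mul_rpow hS.det_pos.le hP'detpos.le, hdet, mul_comm R.det P.det]
  -- assemble
  unfold gaussianPdf
  rw [hzHx, hxμ', hP'inv]
  rw [show (2 * Real.pi) ^ (-(n:ℝ)/2) * P.det ^ (-(1:ℝ)/2) *
        Real.exp (-(1/2) * (u ⬝ᵥ (P⁻¹ *ᵥ u))) *
        ((2 * Real.pi) ^ (-(p:ℝ)/2) * R.det ^ (-(1:ℝ)/2) *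
          Real.exp (-(1/2) * ((w - H *ᵥ u) ⬝ᵥ (R⁻¹ *ᵥ (w - H *ᵥ u)))))
      = (2 * Real.pi) ^ (-(n:ℝ)/2) * (2 * Real.pi) ^ (-(p:ℝ)/2) *
        (P.det ^ (-(1:ℝ)/2) * R.det ^ (-(1:ℝ)/2)) *
        Real.exp (-(1/2) * (u ⬝ᵥ (P⁻¹ *ᵥ u)) +
          -(1/2) * ((w - H *ᵥ u) ⬝ᵥ (R⁻¹ *ᵥ (w - H *ᵥ u)))) by
      rw [Real.exp_add]; ring]
  rw [show (2 * Real.pi) ^ (-(p:ℝ)/2) * S.det ^ (-(1:ℝ)/2) *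
        Real.exp (-(1/2) * (w ⬝ᵥ (S⁻¹ *ᵥ w))) *
        ((2 * Real.pi) ^ (-(n:ℝ)/2) * P'.det ^ (-(1:ℝ)/2) *
          Real.exp (-(1/2) * ((u - K *ᵥ w) ⬝ᵥ (M *ᵥ (u - K *ᵥ w)))))
      = (2 * Real.pi) ^ (-(n:ℝ)/2) * (2 * Real.pi) ^ (-(p:ℝ)/2) *
        (S.det ^ (-(1:ℝ)/2) * P'.det ^ (-(1:ℝ)/2)) *
        Real.exp (-(1/2) * (w ⬝ᵥ (S⁻¹ *ᵥ w)) +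
          -(1/2) * ((u - K *ᵥ w) ⬝ᵥ (M *ᵥ (u - K *ᵥ w)))) by
      rw [Real.exp_add]; ring]
  rw [hdetpow]
  congr 1
  exact congrArg Real.exp (by linear_combination (-(1:ℝ)/2) * hquad)

/-- Multiplying a Gaussian-mixture prior by the Bernoulli-filter
detection-and-clutter likelihood yields again a Gaussian mixture, with Kalman-updated
components. -/
theorem gm_bernoulli_update
    {n p : ℕ} {J : ℕ}
    -- Gaussian-mixture prior
    (α : Fin J → ℝ) (hα0 : ∀ j, 0 ≤ α j) (hα1 : ∑ j, α j = 1)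
    (μs : Fin J → Fin n → ℝ)
    (Ps : Fin J → Matrix (Fin n) (Fin n) ℝ) (hPs : ∀ j, (Ps j).PosDef)
    (s' : (Fin n → ℝ) → ℝ)
    (hs' : ∀ x, s' x = ∑ j, α j * gaussianPdf (μs j) (Ps j) x)
    -- linear-Gaussian measurement model, detection probability and clutter
    (H : Matrix (Fin p) (Fin n) ℝ)
    (R : Matrix (Fin p) (Fin p) ℝ) (hR : R.PosDef)
    (pD : ℝ) (hpD : pD ∈ Set.Icc (0 : ℝ) 1)
    (Z : Finset (Fin p → ℝ))
    (κ : (Fin p → ℝ) → ℝ) (hκ : ∀ z ∈ Z, 0 < κ z)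
    -- detection-and-clutter likelihood
    (ℓ : (Fin n → ℝ) → ℝ)
    (hℓ : ∀ x, ℓ x = (1 - pD) + pD * ∑ z ∈ Z, gaussianPdf (H *ᵥ x) R z / κ z)
    -- Kalman quantities
    (S : Fin J → Matrix (Fin p) (Fin p) ℝ) (hS : ∀ j, S j = R + H * Ps j * Hᵀ)
    (K : Fin J → Matrix (Fin n) (Fin p) ℝ) (hK : ∀ j, K j = Ps j * Hᵀ * (S j)⁻¹)
    (μz : Fin J → (Fin p → ℝ) → Fin n → ℝ)
    (hμz : ∀ j z, μz j z = μs j + K j *ᵥ (z - H *ᵥ μs j))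
    (Ps' : Fin J → Matrix (Fin n) (Fin n) ℝ)
    (hPs' : ∀ j, Ps' j = (1 - K j * H) * Ps j)
    (αz : Fin J → (Fin p → ℝ) → ℝ)
    (hαz : ∀ j z, αz j z = α j * gaussianPdf (H *ᵥ μs j) (S j) z / κ z) :
    ∀ x : Fin n → ℝ,
      s' x * ℓ x =
        (1 - pD) * ∑ j, α j * gaussianPdf (μs j) (Ps j) x
          + pD * ∑ z ∈ Z, ∑ j, αz j z * gaussianPdf (μz j z) (Ps' j) x := by
  intro x
  rw [hs' x, hℓ x, mul_add]
  congr 1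
  · rw [mul_comm]
  · rw [mul_left_comm, Finset.mul_sum]
    congr 1
    apply Finset.sum_congr rfl
    intro z _
    rw [Finset.sum_mul]
    apply Finset.sum_congr rfl
    intro j _
    rw [hαz, hμz, hPs', hK, hS]
    have h := gauss_prod (Ps j) (hPs j) R hR H (μs j) z x
    calc α j * gaussianPdf (μs j) (Ps j) x * (gaussianPdf (H *ᵥ x) R z / κ z)
        = α j * (gaussianPdf (μs j) (Ps j) x * gaussianPdf (H *ᵥ x) R z) / κ z := by
          ring
      _ = α j * (gaussianPdf (H *ᵥ μs j) (R + H * Ps j * Hᵀ) z *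
            gaussianPdf (μs j + (Ps j * Hᵀ * (R + H * Ps j * Hᵀ)⁻¹) *ᵥ (z - H *ᵥ μs j))
              ((1 - Ps j * Hᵀ * (R + H * Ps j * Hᵀ)⁻¹ * H) * Ps j) x) / κ z := by
          rw [h]
      _ = α j * gaussianPdf (H *ᵥ μs j) (R + H * Ps j * Hᵀ) z / κ z *
            gaussianPdf (μs j + (Ps j * Hᵀ * (R + H * Ps j * Hᵀ)⁻¹) *ᵥ (z - H *ᵥ μs j))
              ((1 - Ps j * Hᵀ * (R + H * Ps j * Hᵀ)⁻¹ * H) * Ps j) x := by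
          ring
end
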